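/- Let t ≥ 4 be an integer and G a connected graph of order n ≥ 2. If t ≡ 1 (mod 4), then dim_l(G ⊙ P_t) = n·⌊t/4⌋, and if t ≢ 1 (mod 4), then dim_l(G ⊙ P_t) = n·⌈t/4⌉. -/

import Mathlib

open SimpleGraph

/-- A set `S` is a local metric generator for `G` if every pair of adjacent
vertices is distinguished (by distance) by some element of `S`. -/
def IsLocalMetricGenerator {α : Type*} (G : SimpleGraph α) (S : Set α) : Prop :=
  ∀ x y : α, G.Adj x y → ∃ v ∈ S, G.dist v x ≠ G.dist v y

/-- The local metric dimension of a graph. -/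
noncomputable def localMetricDim {α : Type*} (G : SimpleGraph α) : ℕ :=
  sInf {k | ∃ S : Finset α, S.card = k ∧ IsLocalMetricGenerator G ↑S}

/-- A local metric basis: a minimum-cardinality local metric generator. -/
def IsLocalMetricBasis {α : Type*} (G : SimpleGraph α) (S : Finset α) : Prop :=
  IsLocalMetricGenerator G ↑S ∧ S.card = localMetricDim G

/-- The corona product `G ⊙ H`. -/
def corona {α β : Type*} (G : SimpleGraph α) (H : SimpleGraph β) :
    SimpleGraph (α ⊕ α × β) :=
  SimpleGraph.fromRel (fun x y => match x, y with
    | Sum.inl a, Sum.inl a' => G.Adj a a'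
    | Sum.inl a, Sum.inr p => a = p.1
    | Sum.inr p, Sum.inl a => a = p.1
    | Sum.inr p, Sum.inr q => p.1 = q.1 ∧ H.Adj p.2 q.2)

/-- The join `K₁ + H`; the vertex of `K₁` is `none`. -/
def joinK1 {β : Type*} (H : SimpleGraph β) : SimpleGraph (Option β) :=
  SimpleGraph.fromRel (fun x y => match x, y with
    | none, some _ => True
    | some b, some b' => H.Adj b b'
    | _, _ => False)

/-- Eccentricity of a vertex (in `ℕ∞`). -/
noncomputable def ecc {α : Type*} (G : SimpleGraph α) (x : α) : ℕ∞ :=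
  ⨆ y, G.edist x y

/-- Radius of a graph (in `ℕ∞`). -/
noncomputable def gradius {α : Type*} (G : SimpleGraph α) : ℕ∞ :=
  ⨅ x, ecc G x

/-- Diameter of a graph (in `ℕ∞`). -/
noncomputable def gdiam {α : Type*} (G : SimpleGraph α) : ℕ∞ :=
  ⨆ x, ecc G x

/-! ### Auxiliary lemmas -/

open Sum

section CoronaLemmas

variable {α β : Type*} {G : SimpleGraph α} {H : SimpleGraph β}

lemma corona_adj_inl_inl {a b : α} :
    (corona G H).Adj (inl a) (inl b) ↔ G.Adj a b := by
  constructor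
  · rintro ⟨hne, h | h⟩
    · exact h
    · exact h.symm
  · exact fun h => ⟨by simpa using h.ne, Or.inl h⟩

lemma corona_adj_inl_inr {a : α} {p : α × β} :
    (corona G H).Adj (inl a) (inr p) ↔ a = p.1 := by
  constructor
  · rintro ⟨hne, h | h⟩ <;> exact h
  · exact fun h => ⟨by simp, Or.inl h⟩

lemma corona_adj_inr_inl {a : α} {p : α × β} :
    (corona G H).Adj (inr p) (inl a) ↔ a = p.1 := by
  constructor
  · rintro ⟨hne, h | h⟩ <;> exact h
  · exact fun h => ⟨by simp, Or.inl h⟩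

lemma corona_adj_inr_inr {p q : α × β} :
    (corona G H).Adj (inr p) (inr q) ↔ p.1 = q.1 ∧ H.Adj p.2 q.2 := by
  constructor
  · rintro ⟨hne, ⟨h1, h2⟩ | ⟨h1, h2⟩⟩
    · exact ⟨h1, h2⟩
    · exact ⟨h1.symm, h2.symm⟩
  · rintro ⟨h1, h2⟩
    exact ⟨by simp [Prod.ext_iff, h2.ne], Or.inl ⟨h1, h2⟩⟩

lemma corona_reach_inl_inl' : ∀ {a b : α}, G.Walk a b →
    (corona G H).Reachable (inl a) (inl b)
  | _, _, SimpleGraph.Walk.nil => Reachable.refl _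
  | _, _, SimpleGraph.Walk.cons h W =>
    (Adj.reachable (corona_adj_inl_inl.mpr h)).trans (corona_reach_inl_inl' W)

lemma corona_reach_inl_inl (hG : G.Preconnected) (a b : α) :
    (corona G H).Reachable (inl a) (inl b) := by
  obtain ⟨W⟩ := hG a b
  exact corona_reach_inl_inl' W

lemma corona_connected (hG : G.Connected) : (corona G H).Connected := by
  haveI hne : Nonempty α := hG.nonempty
  constructor
  intro x y
  have key : ∀ z : α ⊕ α × β, ∃ a, (corona G H).Reachable z (inl a) := by
      rintro (a | p)
      · exact ⟨a, Reachable.refl _⟩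
      · exact ⟨p.1, Adj.reachable (corona_adj_inr_inl.mpr rfl)⟩
  obtain ⟨a, ha⟩ := key x
  obtain ⟨b, hb⟩ := key y
  exact (ha.trans (corona_reach_inl_inl hG.preconnected a b)).trans hb.symm

lemma adj_to_copy {x : α ⊕ α × β} {a : α} {q : β}
    (h : (corona G H).Adj x (inr (a, q))) : x = inl a ∨ ∃ q', x = inr (a, q') := by
  cases x with
  | inl b =>
    left
    have := corona_adj_inl_inr.mp h
    simp_all
  | inr p =>
    right
    obtain ⟨h1, -⟩ := corona_adj_inr_inr.mp h
    have h1' : p.1 = a := h1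
    exact ⟨p.2, by rw [← h1']⟩

lemma walk_mem_inl {a : α} : ∀ {v x : α ⊕ α × β} (W : (corona G H).Walk v x),
    (∃ q, x = inr (a, q)) → (∀ q, v ≠ inr (a, q)) → inl a ∈ W.support := by
  intro v x W
  induction W with
  | nil =>
    rintro ⟨q, rfl⟩ hv
    exact absurd rfl (hv q)
  | @cons u u' x h W ih =>
    rintro hx hv
    by_cases hu : ∃ q, u' = inr (a, q)
    · obtain ⟨q, rfl⟩ := hu
      rcases adj_to_copy h with rfl | ⟨q', rfl⟩
      · exact Walk.start_mem_support _
      · exact absurd rfl (hv q')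
    · have := ih hx (fun q hq => hu ⟨q, hq⟩)
      simp [Walk.support_cons, this]

/-- Entrance lemma: a vertex outside the copy of `H` over `a` is at distance exactly
`dist v (inl a) + 1` from any vertex of that copy. -/
lemma corona_dist_outside (hG : G.Connected) {a : α} {v : α ⊕ α × β}
    (hv : ∀ q, v ≠ inr (a, q)) (p : β) :
    (corona G H).dist v (inr (a, p)) = (corona G H).dist v (inl a) + 1 := by
  classical
  have hC := corona_connected (H := H) hG
  have hd1 : (corona G H).dist (inl a) (inr (a, p)) = 1 :=
    dist_eq_one_iff_adj.mpr (corona_adj_inl_inr.mpr rfl)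
  apply le_antisymm
  · calc (corona G H).dist v (inr (a, p))
        ≤ (corona G H).dist v (inl a) + (corona G H).dist (inl a) (inr (a, p)) :=
          hC.dist_triangle
      _ = (corona G H).dist v (inl a) + 1 := by rw [hd1]
  · obtain ⟨W, hW⟩ := ((hC.preconnected v (inr (a, p)))).exists_walk_length_eq_dist
    have hmem : inl a ∈ W.support := walk_mem_inl W ⟨p, rfl⟩ hv
    have hsplit := W.take_spec hmem
    have hlen : (W.takeUntil _ hmem).length + (W.dropUntil _ hmem).length = W.length := by
      conv_rhs => rw [← hsplit]
      rw [Walk.length_append]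
    have h1 : (corona G H).dist v (inl a) ≤ (W.takeUntil _ hmem).length := dist_le _
    have h2 : 1 ≤ (W.dropUntil _ hmem).length := by
      by_contra hc
      push_neg at hc
      interval_cases h : (W.dropUntil _ hmem).length
      · exact absurd ((W.dropUntil _ hmem).eq_of_length_eq_zero h) (by simp)
    omega

lemma corona_dist_inl_inr {a : α} (p : β) :
    (corona G H).dist (inl a) (inr (a, p)) = 1 :=
  dist_eq_one_iff_adj.mpr (corona_adj_inl_inr.mpr rfl)

lemma corona_dist_inr_inl {a : α} (p : β) :
    (corona G H).dist (inr (a, p)) (inl a) = 1 :=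
  dist_eq_one_iff_adj.mpr (corona_adj_inr_inl.mpr rfl)

end CoronaLemmas

/-- Truncated distance within a copy of a path. -/
def td (w p : ℕ) : ℕ := if w = p then 0 else if w + 1 = p ∨ p + 1 = w then 1 else 2

lemma corona_dist_inr_inr {α : Type*} {t : ℕ} {G : SimpleGraph α} {a : α} (w p : Fin t) :
    (corona G (pathGraph t)).dist (inr (a, w)) (inr (a, p)) = td w.val p.val := by
  set C := corona G (pathGraph t) with hC
  have h1 : C.Adj (inr (a, w)) (inl a) := corona_adj_inr_inl.mpr rfl
  have h2 : C.Adj (inl a) (inr (a, p)) := corona_adj_inl_inr.mpr rfl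
  by_cases hwp : w = p
  · subst hwp
    simp [td, dist_self]
  · have hvne : w.val ≠ p.val := fun h => hwp (Fin.ext h)
    rw [td, if_neg hvne]
    by_cases hadj : w.val + 1 = p.val ∨ p.val + 1 = w.val
    · rw [if_pos hadj]
      exact dist_eq_one_iff_adj.mpr (corona_adj_inr_inr.mpr ⟨rfl, pathGraph_adj.mpr hadj⟩)
    · rw [if_neg hadj]
      have hreach : C.Reachable (inr (a, w)) (inr (a, p)) :=
        (Adj.reachable h1).trans (Adj.reachable h2)
      have hle : C.dist (inr (a, w)) (inr (a, p)) ≤ 2 := by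
        have := dist_le (Walk.cons h1 (Walk.cons h2 Walk.nil))
        simpa using this
      have hne0 : 0 < C.dist (inr (a, w)) (inr (a, p)) :=
        hreach.pos_dist_of_ne (by simp [Prod.ext_iff]; intro h; exact absurd h hwp)
      have hne1 : C.dist (inr (a, w)) (inr (a, p)) ≠ 1 := by
        intro h
        have := dist_eq_one_iff_adj.mp h
        obtain ⟨-, hA⟩ := corona_adj_inr_inr.mp this
        exact hadj (pathGraph_adj.mp hA)
      omega

/-- Window implies distinguishing. -/
lemma td_ne {w e : ℕ} (h1 : e ≤ w + 1) (h2 : w ≤ e + 2) : td w e ≠ td w (e + 1) := by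
  simp only [td]; split_ifs <;> omega

/-- Distinguishing implies window. -/
lemma td_window {w e : ℕ} (h : td w e ≠ td w (e + 1)) : e ≤ w + 1 ∧ w ≤ e + 2 := by
  by_contra hc
  apply h
  simp only [td]; split_ifs <;> omega

/-- Lower bound: any "window cover" of the path has at least `(t+2)/4` elements. -/
lemma windowCover_card_lb {t : ℕ} (ht : 4 ≤ t) (T : Finset (Fin t))
    (h : ∀ e, e + 1 < t → ∃ w ∈ T, e ≤ w.val + 1 ∧ w.val ≤ e + 2) :
    (t + 2) / 4 ≤ T.card := by
  classical
  have hsub : Finset.range (t - 1) ⊆ T.biUnion (fun w => Finset.Icc (w.val - 2) (w.val + 1)) := by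
    intro e he
    rw [Finset.mem_range] at he
    obtain ⟨w, hw, hw1, hw2⟩ := h e (by omega)
    exact Finset.mem_biUnion.mpr ⟨w, hw, Finset.mem_Icc.mpr (by omega)⟩
  have hcard := Finset.card_le_card hsub
  have hbu := Finset.card_biUnion_le (s := T)
    (t := fun w => Finset.Icc (w.val - 2) (w.val + 1))
  have hsum : ∑ w ∈ T, (Finset.Icc (w.val - 2) (w.val + 1)).card ≤ ∑ _w ∈ T, 4 := by
    apply Finset.sum_le_sum
    intro w _
    rw [Nat.card_Icc]
    omega
  rw [Finset.sum_const, smul_eq_mul] at hsum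
  rw [Finset.card_range] at hcard
  omega

lemma key_dim {α : Type*} [Fintype α] (G : SimpleGraph α) (hG : G.Connected)
    (hn : 2 ≤ Fintype.card α) (t : ℕ) (ht : 4 ≤ t) :
    localMetricDim (corona G (SimpleGraph.pathGraph t)) = Fintype.card α * ((t + 2) / 4) := by
  classical
  set C := corona G (pathGraph t) with hCdef
  set k := (t + 2) / 4 with hkdef
  have hk0 : 0 < k := by omega
  -- the explicit generator
  set f : Fin k → Fin t := fun j =>
    ⟨min (4 * j.val + 2) (t - 1), lt_of_le_of_lt (min_le_right _ _) (by omega)⟩ with hfdef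
  have hfinj : Function.Injective f := by
    intro i j h
    have hi := i.isLt
    have hj := j.isLt
    simp only [hfdef, Fin.ext_iff, Nat.min_def] at h ⊢
    split_ifs at h <;> omega
  set S : Finset (α ⊕ α × Fin t) :=
    Finset.image (fun aj : α × Fin k => (inr (aj.1, f aj.2) : α ⊕ α × Fin t)) Finset.univ
    with hSdef
  have hSinj : Function.Injective
      (fun aj : α × Fin k => (inr (aj.1, f aj.2) : α ⊕ α × Fin t)) := by
    rintro ⟨a, i⟩ ⟨b, j⟩ h
    simp only [inr.injEq, Prod.mk.injEq] at h
    exact Prod.ext h.1 (hfinj h.2)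
  have hScard : S.card = Fintype.card α * k := by
    rw [hSdef, Finset.card_image_of_injective _ hSinj, Finset.card_univ,
      Fintype.card_prod, Fintype.card_fin]
  have hmemS : ∀ (a : α) (j : Fin k), (inr (a, f j) : α ⊕ α × Fin t) ∈ S := by
    intro a j
    exact Finset.mem_image.mpr ⟨(a, j), Finset.mem_univ _, rfl⟩
  -- window property of f
  have hwin : ∀ e : ℕ, e + 1 < t → ∃ j : Fin k, e ≤ (f j).val + 1 ∧ (f j).val ≤ e + 2 := by
    intro e he
    refine ⟨⟨e / 4, by omega⟩, ?_⟩
    simp only [hfdef]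
    rcases le_total (4 * (e / 4) + 2) (t - 1) with h | h
    · rw [min_eq_left h]; constructor <;> omega
    · rw [min_eq_right h]; constructor <;> omega
  -- the generator property of S
  have hgen : IsLocalMetricGenerator C ↑S := by
    rintro (a | ⟨a, p⟩) (b | ⟨b, q⟩) hadj
    · -- inl a ~ inl b
      have hab : G.Adj a b := corona_adj_inl_inl.mp hadj
      refine ⟨inr (a, f ⟨0, hk0⟩), hmemS a _, ?_⟩
      rw [corona_dist_inr_inl]
      intro h
      have := dist_eq_one_iff_adj.mp h.symm
      have hba : b = a := corona_adj_inr_inl.mp this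
      exact hab.ne hba.symm
    · -- inl a ~ inr (b, q)
      have hab : a = b := corona_adj_inl_inr.mp hadj
      subst hab
      obtain ⟨c, hc⟩ := Fintype.exists_ne_of_one_lt_card (by omega) a
      have hv : ∀ q' : Fin t, (inr (c, f ⟨0, hk0⟩) : α ⊕ α × Fin t) ≠ inr (a, q') := by
        intro q'
        simp [Prod.ext_iff, hc]
      refine ⟨inr (c, f ⟨0, hk0⟩), hmemS c _, ?_⟩
      rw [hCdef, corona_dist_outside hG hv]
      omega
    · -- inr (a, p) ~ inl b
      have hab : b = a := corona_adj_inr_inl.mp hadj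
      subst hab
      obtain ⟨c, hc⟩ := Fintype.exists_ne_of_one_lt_card (by omega) b
      have hv : ∀ q' : Fin t, (inr (c, f ⟨0, hk0⟩) : α ⊕ α × Fin t) ≠ inr (b, q') := by
        intro q'
        simp [Prod.ext_iff, hc]
      refine ⟨inr (c, f ⟨0, hk0⟩), hmemS c _, ?_⟩
      rw [hCdef, corona_dist_outside hG hv]
      omega
    · -- inr (a, p) ~ inr (b, q)
      obtain ⟨hab, hpq⟩ := corona_adj_inr_inr.mp hadj
      have hab' : a = b := hab
      subst hab'
      rcases pathGraph_adj.mp hpq with h | h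
      · -- q = p + 1
        replace h : p.val + 1 = q.val := h
        have he : p.val + 1 < t := by have := q.isLt; omega
        obtain ⟨j, hj1, hj2⟩ := hwin p.val he
        refine ⟨inr (a, f j), hmemS a _, ?_⟩
        rw [corona_dist_inr_inr, corona_dist_inr_inr]
        have hq : q.val = p.val + 1 := h.symm
        rw [hq]
        exact td_ne hj1 hj2
      · -- p = q + 1
        replace h : q.val + 1 = p.val := h
        have he : q.val + 1 < t := by have := p.isLt; omega
        obtain ⟨j, hj1, hj2⟩ := hwin q.val he
        refine ⟨inr (a, f j), hmemS a _, ?_⟩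
        rw [corona_dist_inr_inr, corona_dist_inr_inr]
        have hp : p.val = q.val + 1 := h.symm
        rw [hp]
        exact (td_ne hj1 hj2).symm
  have hmem : Fintype.card α * k ∈
      {m | ∃ S : Finset (α ⊕ α × Fin t), S.card = m ∧ IsLocalMetricGenerator C ↑S} :=
    ⟨S, hScard, hgen⟩
  -- lower bound
  have hlb : ∀ m ∈ {m | ∃ S : Finset (α ⊕ α × Fin t),
      S.card = m ∧ IsLocalMetricGenerator C ↑S}, Fintype.card α * k ≤ m := by
    rintro m ⟨S', rfl, hgen'⟩
    set T : α → Finset (Fin t) :=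
      fun a => Finset.univ.filter (fun w => (inr (a, w) : α ⊕ α × Fin t) ∈ S') with hTdef
    have hT : ∀ (a : α) (e : ℕ), e + 1 < t →
        ∃ w ∈ T a, e ≤ w.val + 1 ∧ w.val ≤ e + 2 := by
      intro a e he
      have hadj : C.Adj (inr (a, ⟨e, by omega⟩)) (inr (a, ⟨e + 1, he⟩)) :=
        corona_adj_inr_inr.mpr ⟨rfl, pathGraph_adj.mpr (Or.inl rfl)⟩
      obtain ⟨v, hvS, hvd⟩ := hgen' _ _ hadj
      match v with
      | inl b =>
        by_cases hba : b = a
        · subst hba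
          rw [corona_dist_inl_inr, corona_dist_inl_inr] at hvd
          exact absurd rfl hvd
        · have hv : ∀ q' : Fin t, (inl b : α ⊕ α × Fin t) ≠ inr (a, q') := by simp
          rw [corona_dist_outside hG hv, corona_dist_outside hG hv] at hvd
          exact absurd rfl hvd
      | inr (b, w) =>
        by_cases hba : b = a
        · subst hba
          rw [corona_dist_inr_inr, corona_dist_inr_inr] at hvd
          have hwin' := td_window hvd
          exact ⟨w, Finset.mem_filter.mpr ⟨Finset.mem_univ _, hvS⟩, hwin'⟩
        · have hv : ∀ q' : Fin t, (inr (b, w) : α ⊕ α × Fin t) ≠ inr (a, q') := by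
            intro q'
            simp [Prod.ext_iff, hba]
          rw [corona_dist_outside hG hv, corona_dist_outside hG hv] at hvd
          exact absurd rfl hvd
    have hTcard : ∀ a : α, k ≤ (T a).card := fun a => windowCover_card_lb ht _ (hT a)
    set B : α → Finset (α ⊕ α × Fin t) :=
      fun a => (T a).image (fun w => inr (a, w)) with hBdef
    have hBcard : ∀ a : α, (B a).card = (T a).card := by
      intro a
      apply Finset.card_image_of_injective
      intro w w' h
      simpa using h
    have hBsub : ∀ a : α, B a ⊆ S' := by
      intro a x hx
      obtain ⟨w, hw, rfl⟩ := Finset.mem_image.mp hx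
      exact (Finset.mem_filter.mp hw).2
    have hdisj : ((Finset.univ : Finset α) : Set α).PairwiseDisjoint B := by
      intro a _ b _ hab
      simp only [Function.onFun]
      rw [Finset.disjoint_left]
      intro x hxa hxb
      obtain ⟨w, _, rfl⟩ := Finset.mem_image.mp hxa
      obtain ⟨w', _, h⟩ := Finset.mem_image.mp hxb
      simp only [inr.injEq, Prod.mk.injEq] at h
      exact hab h.1.symm
    calc Fintype.card α * k = ∑ _a : α, k := by
          rw [Finset.sum_const, smul_eq_mul, Finset.card_univ]
      _ ≤ ∑ a : α, (T a).card := Finset.sum_le_sum (fun a _ => hTcard a)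
      _ = ∑ a : α, (B a).card := by simp [hBcard]
      _ = (Finset.univ.biUnion B).card := (Finset.card_biUnion (fun a ha b hb hab =>
            hdisj ha hb hab)).symm
      _ ≤ S'.card := Finset.card_le_card (Finset.biUnion_subset.mpr (fun a _ => hBsub a))
  have h1 : localMetricDim C ≤ Fintype.card α * k := Nat.sInf_le hmem
  have h2 : Fintype.card α * k ≤ localMetricDim C :=
    hlb _ (Nat.sInf_mem ⟨_, hmem⟩)
  omega

theorem stmt8 {α : Type*} [Fintype α] (G : SimpleGraph α) (hG : G.Connected)
    (hn : 2 ≤ Fintype.card α) (t : ℕ) (ht : 4 ≤ t) :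
    (t % 4 = 1 →
      localMetricDim (corona G (SimpleGraph.pathGraph t)) = Fintype.card α * (t / 4)) ∧
    (t % 4 ≠ 1 →
      localMetricDim (corona G (SimpleGraph.pathGraph t)) = Fintype.card α * ((t + 3) / 4)) := by
  have key := key_dim G hG hn t ht
  constructor
  · intro h
    rw [key]
    congr 1
    omega
  · intro h
    rw [key]
    congr 1
    omega
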